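/- Assume condition S1 and let N ≥ 3. Then for every real sequence w_1, …, w_N and every index k with 2 ≤ k ≤ N−1, one has 2·w_k·Σ_{j=1}^k b^{(k)}_{k−j} w_j ≥ (r_{k+1}/(1+r_{k+1}))·w_k²/τ_k − (r_k/(1+r_k))·w_{k−1}²/τ_{k−1}. -/
import Mathlib


open Finset

/-- BDF2 convolution kernels `b^{(n)}_j` built from the step sizes `τ`. -/
noncomputable def bdf2 (τ : ℕ → ℝ) (n j : ℕ) : ℝ :=
  if n = 1 then (if j = 0 then 1 / τ 1 else 0)
  else if j = 0 then (1 + 2 * (τ n / τ (n - 1))) / (τ n * (1 + τ n / τ (n - 1)))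
  else if j = 1 then -(τ n / τ (n - 1)) ^ 2 / (τ n * (1 + τ n / τ (n - 1)))
  else 0

/-- DOC kernels: `doc τ n g = θ^{(n)}_g`, defined by the recursive procedure
`θ^{(n)}_0 = 1/b^{(n)}_0`, `θ^{(n)}_{n-k} = -(1/b^{(k)}_0) ∑_{j=k+1}^n θ^{(n)}_{n-j} b^{(j)}_{j-k}`. -/
noncomputable def doc (τ : ℕ → ℝ) (n : ℕ) : ℕ → ℝ
  | 0 => 1 / bdf2 τ n 0
  | (g + 1) =>
    -(1 / bdf2 τ (n - (g + 1)) 0) *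
      ∑ i ∈ (Finset.range (g + 1)).attach,
        doc τ n i.1 * bdf2 τ (n - i.1) (g + 1 - i.1)
  decreasing_by exact Finset.mem_range.mp i.2

/-- The variable-step BDF2 formula `D_2 v^n = ∑_{k=1}^n b^{(n)}_{n-k} (v^k - v^{k-1})`. -/
noncomputable def D2 {V : Type*} [AddCommGroup V] [Module ℝ V]
    (τ : ℕ → ℝ) (v : ℕ → V) (n : ℕ) : V :=
  ∑ k ∈ Finset.Icc 1 n, bdf2 τ n (n - k) • (v k - v (k - 1))

/-- Time levels `t_n = τ_1 + ⋯ + τ_n`. -/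
noncomputable def tlv (τ : ℕ → ℝ) (n : ℕ) : ℝ := ∑ i ∈ Finset.Icc 1 n, τ i

/-- the kernel inequality of Lemma 2.1 for `2 ≤ k ≤ N-1` under condition S1. -/
-- key scalar inequality under S1
lemma key_scalar (r s : ℝ) (hr : 0 < r) (hs : 0 < s)
    (hrR : r ≤ (3 + Real.sqrt 17) / 2) (hsR : s ≤ (3 + Real.sqrt 17) / 2) :
    s * (1 + r) ≤ (1 + s) * (2 + 4 * r - r ^ 2) := by
  set R := (3 + Real.sqrt 17) / 2 with hRdef
  have h17 : Real.sqrt 17 ^ 2 = 17 := Real.sq_sqrt (by norm_num)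
  have hR4 : (4:ℝ) ≤ Real.sqrt 17 := by nlinarith [Real.sqrt_nonneg 17]
  have hRpos : 0 < R := by rw [hRdef]; nlinarith
  have hR2 : R ^ 2 = 3 * R + 2 := by rw [hRdef]; nlinarith
  have h0 : R ^ 2 - 3 * R - 2 = 0 := by linarith
  have hz : r * ((R + 1) * (R ^ 2 - 3 * R - 2)) = 0 := by rw [h0]; ring
  have hg : 0 ≤ (2 + 4 * r - r ^ 2) * (1 + R) - R * (1 + r) := by
    nlinarith [mul_nonneg (sub_nonneg.2 hrR)
      (by positivity : (0:ℝ) ≤ (1 + R) * r * R + (R + 2)), hRpos, hz]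
  nlinarith [mul_nonneg (by positivity : (0:ℝ) ≤ 1 + s) hg,
    mul_nonneg (by positivity : (0:ℝ) ≤ 1 + r) (sub_nonneg.2 hsR), hRpos]

lemma main_scalar (a b T U r s : ℝ) (hU : 0 < U) (hr : 0 < r) (hs : 0 < s)
    (hTr : T = r * U)
    (hkey : s * (1 + r) ≤ (1 + s) * (2 + 4 * r - r ^ 2)) :
    2 * a * ((1 + 2 * r) / (T * (1 + r)) * a + -r ^ 2 / (T * (1 + r)) * b) ≥
      s / (1 + s) * a ^ 2 / T - r / (1 + r) * b ^ 2 / U := by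
  subst hTr
  have h1r : (0:ℝ) < 1 + r := by linarith
  have h1s : (0:ℝ) < 1 + s := by linarith
  have hq : 0 ≤ (1 + s) * (2 * (1 + 2 * r) * a ^ 2 - 2 * r ^ 2 * a * b + r ^ 2 * b ^ 2)
      - s * (1 + r) * a ^ 2 := by
    nlinarith [mul_nonneg (mul_nonneg h1s.le (sq_nonneg r)) (sq_nonneg (a - b)),
      mul_nonneg (sq_nonneg a) (sub_nonneg.2 hkey)]
  rw [ge_iff_le, ← sub_nonneg]
  have heq : 2 * a * ((1 + 2 * r) / (r * U * (1 + r)) * a + -r ^ 2 / (r * U * (1 + r)) * b) -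
      (s / (1 + s) * a ^ 2 / (r * U) - r / (1 + r) * b ^ 2 / U) =
      ((1 + s) * (2 * (1 + 2 * r) * a ^ 2 - 2 * r ^ 2 * a * b + r ^ 2 * b ^ 2)
        - s * (1 + r) * a ^ 2) / (r * U * (1 + r) * (1 + s)) := by
    field_simp
    ring
  rw [heq]
  exact div_nonneg hq (by positivity)

theorem bdf2_kernel_lower_bound
    (N : ℕ) (hN : 3 ≤ N) (τ : ℕ → ℝ)
    (hτ : ∀ k, 1 ≤ k → k ≤ N → 0 < τ k)
    (hS1 : ∀ k, 2 ≤ k → k ≤ N →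
      0 < τ k / τ (k - 1) ∧ τ k / τ (k - 1) ≤ (3 + Real.sqrt 17) / 2)
    (w : ℕ → ℝ) (k : ℕ) (hk2 : 2 ≤ k) (hkN : k ≤ N - 1) :
    2 * w k * ∑ j ∈ Finset.Icc 1 k, bdf2 τ k (k - j) * w j ≥
      (τ (k + 1) / τ k) / (1 + τ (k + 1) / τ k) * (w k) ^ 2 / τ k
        - (τ k / τ (k - 1)) / (1 + τ k / τ (k - 1)) * (w (k - 1)) ^ 2 / τ (k - 1) := by
  have hkN' : k ≤ N := by omega
  have hT : 0 < τ k := hτ k (by omega) hkN'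
  have hU : 0 < τ (k - 1) := hτ _ (by omega) (by omega)
  obtain ⟨hr0, hrR⟩ := hS1 k hk2 hkN'
  obtain ⟨hs0, hsR⟩ := hS1 (k + 1) (by omega) (by omega)
  simp only [Nat.add_sub_cancel] at hs0 hsR
  have hkne1 : k ≠ 1 := by omega
  have hsum : ∑ j ∈ Finset.Icc 1 k, bdf2 τ k (k - j) * w j =
      bdf2 τ k 0 * w k + bdf2 τ k 1 * w (k - 1) := by
    have hsub : ({k - 1, k} : Finset ℕ) ⊆ Finset.Icc 1 k := by
      intro j hj
      simp only [Finset.mem_insert, Finset.mem_singleton] at hj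
      rw [Finset.mem_Icc]; omega
    rw [← Finset.sum_subset hsub]
    · rw [Finset.sum_pair (by omega : k - 1 ≠ k)]
      have h1 : k - (k - 1) = 1 := by omega
      have h0 : k - k = 0 := by omega
      rw [h1, h0]; ring
    · intro j hj hj2
      simp only [Finset.mem_insert, Finset.mem_singleton, not_or] at hj2
      rw [Finset.mem_Icc] at hj
      have h2 : ¬ (k - j = 0) := by omega
      have h3 : ¬ (k - j = 1) := by omega
      simp [bdf2, hkne1, h2, h3]
  rw [hsum]
  have hb0 : bdf2 τ k 0 = (1 + 2 * (τ k / τ (k - 1))) / (τ k * (1 + τ k / τ (k - 1))) := by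
    simp [bdf2, hkne1]
  have hb1 : bdf2 τ k 1 = -(τ k / τ (k - 1)) ^ 2 / (τ k * (1 + τ k / τ (k - 1))) := by
    simp [bdf2, hkne1]
  rw [hb0, hb1]
  have hTr : τ k = (τ k / τ (k - 1)) * τ (k - 1) := (div_mul_cancel₀ (τ k) hU.ne').symm
  exact main_scalar (w k) (w (k - 1)) (τ k) (τ (k - 1)) (τ k / τ (k - 1)) (τ (k + 1) / τ k)
    hU hr0 hs0 hTr (key_scalar _ _ hr0 hs0 hrR hsR)
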